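/- For any positive integer n and real number a, Σ_{k=0}^{n-1} C(a,k)*C(-1-a,k)*C(2k,k)/4^k · (15k^3 - (4a^2(a+1)^2 - a(a+1) + 1)k - a(a+1)(2a(a+1)-1)) = 2n^3(3n + 2a(a+1) - 4) · C(a,n)*C(-1-a,n)*C(2n,n)/4^n. -/

import Mathlib

/-- Generalized binomial coefficient `C(x, k) = x(x-1)⋯(x-k+1)/k!` for real `x`. -/
noncomputable def gbc (x : ℝ) (k : ℕ) : ℝ :=
  (∏ i ∈ Finset.range k, (x - i)) / (Nat.factorial k)

lemma gbc_succ (x : ℝ) (n : ℕ) : gbc x (n + 1) = gbc x n * (x - n) / (n + 1) := by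
  simp only [gbc, Finset.prod_range_succ, Nat.factorial_succ]
  push_cast
  rw [div_mul_eq_mul_div, div_div, mul_comm (Nat.factorial n : ℝ) ((n : ℝ) + 1)]

lemma cb_succ (n : ℕ) :
    ((Nat.choose (2 * (n + 1)) (n + 1) : ℝ)) * (n + 1) =
      (Nat.choose (2 * n) n : ℝ) * (2 * (2 * n + 1)) := by
  have h := Nat.succ_mul_centralBinom_succ n
  have h2 : (n + 1) * Nat.choose (2 * (n + 1)) (n + 1) =
      2 * (2 * n + 1) * Nat.choose (2 * n) n := by
    simpa [Nat.centralBinom] using h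
  have := congrArg (fun m : ℕ => (m : ℝ)) h2
  push_cast at this
  linarith

lemma key (n : ℕ) (a : ℝ) :
    ∑ k ∈ Finset.range n,
        gbc a k * gbc (-1 - a) k * (Nat.choose (2 * k) k) / 4 ^ k *
          (15 * (k : ℝ) ^ 3 - (4 * a ^ 2 * (a + 1) ^ 2 - a * (a + 1) + 1) * k -
            a * (a + 1) * (2 * a * (a + 1) - 1)) =
      2 * (n : ℝ) ^ 3 * (3 * n + 2 * a * (a + 1) - 4) *
        (gbc a n * gbc (-1 - a) n * (Nat.choose (2 * n) n) / 4 ^ n) := by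
  induction n with
  | zero => simp
  | succ n ih =>
      rw [Finset.sum_range_succ, ih, gbc_succ, gbc_succ]
      have hc := cb_succ n
      have hn1 : ((n : ℝ) + 1) ≠ 0 := by positivity
      have h4 : ((4 : ℝ)) ^ n ≠ 0 := by positivity
      have hC : (Nat.choose (2 * (n + 1)) (n + 1) : ℝ) =
          (Nat.choose (2 * n) n : ℝ) * (2 * (2 * n + 1)) / (n + 1) := by
        field_simp
        linarith
      rw [hC]
      push_cast
      field_simp
      ring

theorem stmt13 (n : ℕ) (hn : 0 < n) (a : ℝ) :
    ∑ k ∈ Finset.range n,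
        gbc a k * gbc (-1 - a) k * (Nat.choose (2 * k) k) / 4 ^ k *
          (15 * (k : ℝ) ^ 3 - (4 * a ^ 2 * (a + 1) ^ 2 - a * (a + 1) + 1) * k -
            a * (a + 1) * (2 * a * (a + 1) - 1)) =
      2 * (n : ℝ) ^ 3 * (3 * n + 2 * a * (a + 1) - 4) *
        (gbc a n * gbc (-1 - a) n * (Nat.choose (2 * n) n) / 4 ^ n) := by
  exact key n a
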